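/- Corollary (mutual independence): for pairwise disjoint nonempty subsets A_1, …, A_r (r ≥ 2) of V, let 𝒟 be the collection of subsets D of A_1 ∪ ⋯ ∪ A_r such that D ⊄ A_i for every i. Then X_{A_1}, …, X_{A_r} are mutually independent if and only if γ_D = 0 for every D ∈ 𝒟. -/

import Mathlib

open Finset

section Helpers
set_option linter.unusedSectionVars false

variable {V : Type*} [Fintype V] [DecidableEq V]

lemma sum_pm_card (D : Finset V) :
    ∑ E ∈ D.powerset, (-1 : ℝ) ^ E.card = if D = ∅ then 1 else 0 := by
  have h := congrArg (fun z : ℤ => (z : ℝ)) (@Finset.sum_powerset_neg_one_pow_card V _ D)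
  push_cast at h
  simpa using h

lemma sum_pm_sdiff (D : Finset V) :
    ∑ E ∈ D.powerset, (-1 : ℝ) ^ (D \ E).card = if D = ∅ then 1 else 0 := by
  rw [← sum_pm_card D]
  refine Finset.sum_nbij' (fun E => D \ E) (fun E => D \ E) ?_ ?_ ?_ ?_ ?_
  · intro a ha; simp
  · intro a ha; simp
  · intro a ha; simp only [mem_powerset] at ha; exact Finset.sdiff_sdiff_eq_self ha
  · intro a ha; simp only [mem_powerset] at ha; exact Finset.sdiff_sdiff_eq_self ha
  · intro a ha; rfl

lemma interval_reindex (F D : Finset V) (hFD : F ⊆ D) (g : Finset V → ℝ) :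
    ∑ E ∈ D.powerset.filter (fun E => F ⊆ E), g (E \ F)
      = ∑ G ∈ (D \ F).powerset, g G := by
  refine Finset.sum_nbij' (fun E => E \ F) (fun G => G ∪ F) ?_ ?_ ?_ ?_ ?_
  · intro a ha
    simp only [mem_filter, mem_powerset] at ha ⊢
    exact sdiff_subset_sdiff ha.1 le_rfl
  · intro a ha
    simp only [mem_powerset, mem_filter] at ha ⊢
    constructor
    · exact union_subset (ha.trans (sdiff_subset)) hFD
    · exact subset_union_right
  · intro a ha
    simp only [mem_filter, mem_powerset] at ha
    exact sdiff_union_of_subset ha.2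
  · intro a ha
    simp only [mem_powerset] at ha
    exact union_sdiff_cancel_right (disjoint_of_subset_left ha sdiff_disjoint)
  · intro a ha; rfl

lemma interval_sign_a (F D : Finset V) (hFD : F ⊆ D) :
    ∑ E ∈ D.powerset.filter (fun E => F ⊆ E), (-1 : ℝ) ^ (E \ F).card
      = if F = D then 1 else 0 := by
  rw [interval_reindex F D hFD (fun G => (-1 : ℝ) ^ G.card), sum_pm_card]
  by_cases h : F = D
  · simp [h]
  · rw [if_neg, if_neg h]
    intro hc
    exact h (subset_antisymm hFD (Finset.sdiff_eq_empty_iff_subset.mp hc))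

lemma interval_sign_b (F D : Finset V) (hFD : F ⊆ D) :
    ∑ E ∈ D.powerset.filter (fun E => F ⊆ E), (-1 : ℝ) ^ (D \ E).card
      = if F = D then 1 else 0 := by
  have key : ∀ E ∈ D.powerset.filter (fun E => F ⊆ E),
      (-1 : ℝ) ^ (D \ E).card = (-1 : ℝ) ^ ((D \ F) \ (E \ F)).card := by
    intro E hE
    simp only [mem_filter, mem_powerset] at hE
    congr 2
    ext x
    simp only [mem_sdiff]
    constructor
    · rintro ⟨h1, h2⟩; exact ⟨⟨h1, fun hx => h2 (hE.2 hx)⟩, fun hx => h2 hx.1⟩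
    · rintro ⟨⟨h1, h2⟩, h3⟩
      refine ⟨h1, fun hx => h3 ⟨hx, h2⟩⟩
  rw [Finset.sum_congr rfl key,
    interval_reindex F D hFD (fun G => (-1 : ℝ) ^ ((D \ F) \ G).card), sum_pm_sdiff]
  by_cases h : F = D
  · simp [h]
  · rw [if_neg, if_neg h]
    intro hc
    exact h (subset_antisymm hFD (Finset.sdiff_eq_empty_iff_subset.mp hc))

lemma moebius_sub (f g : Finset V → ℝ)
    (h : ∀ D, f D = ∑ E ∈ D.powerset, (-1 : ℝ) ^ (D \ E).card * g E)
    (D : Finset V) : ∑ E ∈ D.powerset, f E = g D := by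
  have step1 : ∑ E ∈ D.powerset, f E
      = ∑ E ∈ D.powerset, ∑ F ∈ E.powerset, (-1 : ℝ) ^ (E \ F).card * g F :=
    Finset.sum_congr rfl fun E _ => h E
  rw [step1]
  rw [Finset.sum_comm' (s' := fun F => D.powerset.filter (fun E => F ⊆ E))
    (t' := D.powerset) (by
      intro E F
      simp only [mem_powerset, mem_filter]
      constructor
      · rintro ⟨h1, h2⟩; exact ⟨⟨h1, h2⟩, h2.trans h1⟩
      · rintro ⟨⟨h1, h2⟩, _⟩; exact ⟨h1, h2⟩)]
  have step2 : ∀ F ∈ D.powerset,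
      ∑ E ∈ D.powerset.filter (fun E => F ⊆ E), (-1 : ℝ) ^ (E \ F).card * g F
        = (if F = D then 1 else 0) * g F := by
    intro F hF
    rw [← Finset.sum_mul, interval_sign_a F D (mem_powerset.mp hF)]
  rw [Finset.sum_congr rfl step2]
  rw [Finset.sum_eq_single D]
  · simp
  · intro F _ hne; simp [hne]
  · intro hD; exact absurd (mem_powerset.mpr le_rfl) hD

lemma moebius_sup (A : Finset V) (f g : Finset V → ℝ)
    (h : ∀ D ⊆ A, g D = ∑ E ∈ A.powerset.filter (fun E => D ⊆ E), f E)
    (D : Finset V) (hD : D ⊆ A) :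
    f D = ∑ E ∈ A.powerset.filter (fun E => D ⊆ E), (-1 : ℝ) ^ (E \ D).card * g E := by
  have step1 : ∑ E ∈ A.powerset.filter (fun E => D ⊆ E), (-1 : ℝ) ^ (E \ D).card * g E
      = ∑ E ∈ A.powerset.filter (fun E => D ⊆ E),
          ∑ F ∈ A.powerset.filter (fun F => E ⊆ F), (-1 : ℝ) ^ (E \ D).card * f F := by
    refine Finset.sum_congr rfl fun E hE => ?_
    simp only [mem_filter, mem_powerset] at hE
    rw [h E hE.1, Finset.mul_sum]
  rw [step1]
  rw [Finset.sum_comm' (s' := fun F => F.powerset.filter (fun E => D ⊆ E))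
    (t' := A.powerset.filter (fun F => D ⊆ F)) (by
      intro E F
      simp only [mem_filter, mem_powerset]
      constructor
      · rintro ⟨⟨h1, h2⟩, h3, h4⟩; exact ⟨⟨h4, h2⟩, h3, h2.trans h4⟩
      · rintro ⟨⟨h1, h2⟩, h3, h4⟩; exact ⟨⟨h1.trans h3, h2⟩, h3, h1⟩)]
  have step2 : ∀ F ∈ A.powerset.filter (fun F => D ⊆ F),
      ∑ E ∈ F.powerset.filter (fun E => D ⊆ E), (-1 : ℝ) ^ (E \ D).card * f F
        = (if D = F then 1 else 0) * f F := by
    intro F hF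
    simp only [mem_filter, mem_powerset] at hF
    rw [← Finset.sum_mul, interval_sign_a D F hF.2]
  rw [Finset.sum_congr rfl step2]
  rw [Finset.sum_eq_single D]
  · simp
  · intro F hF hne; rw [if_neg (fun hc => hne hc.symm), zero_mul]
  · intro hD'
    exact absurd (mem_filter.mpr ⟨mem_powerset.mpr hD, le_rfl⟩) hD'

end Helpers


/-- Probability that the subvector `X_A` shows the cell pattern `i ⊆ A`
(coordinates in `i` equal to 1, coordinates in `A \ i` equal to 0), for a
binary random vector whose joint distribution on `{0,1}^V` is encoded by the
vector `π` indexed by subsets of `V`. -/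
def cellProb {V : Type*} [Fintype V] [DecidableEq V]
    (π : Finset V → ℝ) (A i : Finset V) : ℝ :=
  ∑ H ∈ univ.powerset.filter (fun H => H ∩ A = i), π H

/-- The mean parameter: `μ_D = P(X_D = 1_D)`. -/
def mu {V : Type*} [Fintype V] [DecidableEq V]
    (π : Finset V → ℝ) (D : Finset V) : ℝ :=
  ∑ H ∈ univ.powerset.filter (fun H => D ⊆ H), π H

/-- The log-mean linear parameter `γ_D = Σ_{E ⊆ D} (-1)^{|D\E|} log μ_E`. -/
noncomputable def gam {V : Type*} [Fintype V] [DecidableEq V]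
    (π : Finset V → ℝ) (D : Finset V) : ℝ :=
  ∑ E ∈ D.powerset, (-1 : ℝ) ^ (D \ E).card * Real.log (mu π E)


section Helpers2
set_option linter.unusedSectionVars false
variable {V : Type*} [Fintype V] [DecidableEq V]

lemma mu_pos (π : Finset V → ℝ) (hpos : ∀ H, 0 < π H) (D : Finset V) :
    0 < mu π D := by
  refine Finset.sum_pos (fun H _ => hpos H) ⟨univ, ?_⟩
  simp

lemma mu_empty (π : Finset V → ℝ)
    (hsum : ∑ H ∈ (univ : Finset V).powerset, π H = 1) : mu π ∅ = 1 := by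
  rw [mu, ← hsum]
  congr 1
  exact Finset.filter_true_of_mem (fun H _ => empty_subset H)

lemma gam_empty (π : Finset V → ℝ)
    (hsum : ∑ H ∈ (univ : Finset V).powerset, π H = 1) : gam π ∅ = 0 := by
  simp [gam, mu_empty π hsum]

lemma log_mu_eq_sum_gam (π : Finset V → ℝ) (D : Finset V) :
    ∑ E ∈ D.powerset, gam π E = Real.log (mu π D) :=
  moebius_sub (gam π) (fun E => Real.log (mu π E)) (fun _ => rfl) D

lemma mu_eq_sum_cellProb (π : Finset V → ℝ) (A D : Finset V) (hDA : D ⊆ A) :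
    mu π D = ∑ i ∈ A.powerset.filter (fun i => D ⊆ i), cellProb π A i := by
  rw [mu]
  rw [← Finset.sum_fiberwise_of_maps_to (g := fun H => H ∩ A)
    (t := A.powerset.filter (fun i => D ⊆ i)) (by
      intro H hH
      simp only [mem_filter, mem_powerset] at hH ⊢
      exact ⟨inter_subset_right, subset_inter hH.2 hDA⟩)]
  refine Finset.sum_congr rfl fun i hi => ?_
  simp only [mem_filter, mem_powerset] at hi
  rw [cellProb]
  congr 1
  ext H
  simp only [mem_filter, mem_powerset, subset_univ, true_and]
  constructor
  · rintro ⟨_, h2⟩; exact h2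
  · intro h2
    refine ⟨?_, h2⟩
    rw [← h2] at hi
    exact hi.2.trans inter_subset_left

lemma biUnion_inter_block {r : ℕ} (A : Fin r → Finset V)
    (hdisj : ∀ i j, i ≠ j → Disjoint (A i) (A j))
    (p : Fin r → Finset V) (hp : ∀ j, p j ⊆ A j) (j : Fin r) :
    (univ.biUnion p) ∩ A j = p j := by
  ext x
  simp only [mem_inter, mem_biUnion, mem_univ, true_and]
  constructor
  · rintro ⟨⟨k, hk⟩, hx⟩
    rcases eq_or_ne k j with rfl | hne
    · exact hk
    · exact absurd hx (Finset.disjoint_left.mp (hdisj k j hne) (hp k hk))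
  · intro hx; exact ⟨⟨j, hx⟩, hp j hx⟩

lemma inter_biUnion_self {r : ℕ} (A : Fin r → Finset V)
    (i : Finset V) (hi : i ⊆ univ.biUnion A) :
    univ.biUnion (fun j => i ∩ A j) = i := by
  ext x
  simp only [mem_biUnion, mem_univ, true_and, mem_inter]
  constructor
  · rintro ⟨j, hj, _⟩; exact hj
  · intro hx
    obtain ⟨j, _, hj⟩ := mem_biUnion.mp (hi hx)
    exact ⟨j, hx, hj⟩

lemma sum_interval_pi {r : ℕ} (A : Fin r → Finset V)
    (hdisj : ∀ i j, i ≠ j → Disjoint (A i) (A j))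
    (D : Finset V) (hD : D ⊆ univ.biUnion A) (F : Finset V → ℝ) :
    ∑ i ∈ (univ.biUnion A).powerset.filter (fun i => D ⊆ i), F i
      = ∑ p ∈ Fintype.piFinset (fun j => (A j).powerset.filter (fun i => D ∩ A j ⊆ i)),
          F (univ.biUnion p) := by
  refine Finset.sum_nbij' (fun i => fun j => i ∩ A j) (fun p => univ.biUnion p)
    ?_ ?_ ?_ ?_ ?_
  · intro i hi
    simp only [mem_filter, mem_powerset] at hi
    rw [Fintype.mem_piFinset]
    intro j
    simp only [mem_filter, mem_powerset]
    exact ⟨inter_subset_right, inter_subset_inter hi.2 le_rfl⟩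
  · intro p hp
    rw [Fintype.mem_piFinset] at hp
    simp only [mem_filter, mem_powerset] at hp ⊢
    constructor
    · refine biUnion_subset.mpr fun j _ => ?_
      exact (hp j).1.trans (subset_biUnion_of_mem A (mem_univ j))
    · intro x hx
      obtain ⟨j, _, hj⟩ := mem_biUnion.mp (hD hx)
      exact mem_biUnion.mpr ⟨j, mem_univ j, (hp j).2 (mem_inter.mpr ⟨hx, hj⟩)⟩
  · intro i hi
    simp only [mem_filter, mem_powerset] at hi
    exact inter_biUnion_self A i hi.1
  · intro p hp
    rw [Fintype.mem_piFinset] at hp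
    funext j
    exact biUnion_inter_block A hdisj p
      (fun k => (mem_powerset.mp (mem_filter.mp (hp k)).1)) j
  · intro i hi
    simp only [mem_filter, mem_powerset] at hi
    rw [inter_biUnion_self A i hi.1]

lemma mu_factor_of_cell {r : ℕ} (π : Finset V → ℝ) (A : Fin r → Finset V)
    (hdisj : ∀ i j, i ≠ j → Disjoint (A i) (A j))
    (hcell : ∀ f : Fin r → Finset V, (∀ j, f j ⊆ A j) →
        cellProb π (univ.biUnion A) (univ.biUnion f)
          = ∏ j : Fin r, cellProb π (A j) (f j))
    (D : Finset V) (hD : D ⊆ univ.biUnion A) :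
    mu π D = ∏ j : Fin r, mu π (D ∩ A j) := by
  rw [mu_eq_sum_cellProb π (univ.biUnion A) D hD,
    sum_interval_pi A hdisj D hD (cellProb π (univ.biUnion A))]
  have step : ∀ p ∈ Fintype.piFinset
      (fun j => (A j).powerset.filter (fun i => D ∩ A j ⊆ i)),
      cellProb π (univ.biUnion A) (univ.biUnion p)
        = ∏ j : Fin r, cellProb π (A j) (p j) := by
    intro p hp
    rw [Fintype.mem_piFinset] at hp
    exact hcell p fun j => mem_powerset.mp (mem_filter.mp (hp j)).1
  rw [Finset.sum_congr rfl step, ← Finset.prod_univ_sum]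
  exact Finset.prod_congr rfl fun j _ =>
    (mu_eq_sum_cellProb π (A j) (D ∩ A j) inter_subset_right).symm

lemma sum_powerset_split (D B : Finset V) (h : Finset V → ℝ) :
    ∑ E ∈ D.powerset, h E
      = ∑ F ∈ (D ∩ B).powerset, ∑ G ∈ (D \ B).powerset, h (F ∪ G) := by
  rw [← Finset.sum_product']
  refine Finset.sum_nbij' (fun E => (E ∩ B, E \ B)) (fun q => q.1 ∪ q.2) ?_ ?_ ?_ ?_ ?_
  · intro E hE
    simp only [mem_powerset] at hE
    simp only [mem_product, mem_powerset]
    exact ⟨inter_subset_inter hE le_rfl, sdiff_subset_sdiff hE le_rfl⟩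
  · intro q hq
    simp only [mem_product, mem_powerset] at hq ⊢
    exact union_subset (hq.1.trans inter_subset_left) (hq.2.trans sdiff_subset)
  · intro E _
    ext x
    simp only [mem_union, mem_inter, mem_sdiff]
    tauto
  · intro q hq
    simp only [mem_product, mem_powerset] at hq
    have h1 : q.1 ⊆ B := hq.1.trans inter_subset_right
    have h2 : Disjoint q.2 B := disjoint_of_subset_left hq.2 sdiff_disjoint
    have e1 : (q.1 ∪ q.2) ∩ B = q.1 := by
      rw [union_inter_distrib_right, inter_eq_left.mpr h1,
        (Finset.disjoint_iff_inter_eq_empty.mp h2), union_empty]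
    have e2 : (q.1 ∪ q.2) \ B = q.2 := by
      rw [union_sdiff_distrib, Finset.sdiff_eq_empty_iff_subset.mpr h1,
        Finset.sdiff_eq_self_of_disjoint h2, empty_union]
    exact Prod.ext e1 e2
  · intro E _
    congr 1
    ext x
    simp only [mem_union, mem_inter, mem_sdiff]
    tauto

lemma crossing_sum_zero (D B : Finset V) (hDB : ¬ D ⊆ B) (h : Finset V → ℝ) :
    ∑ E ∈ D.powerset, (-1 : ℝ) ^ (D \ E).card * h (E ∩ B) = 0 := by
  rw [sum_powerset_split D B (fun E => (-1 : ℝ) ^ (D \ E).card * h (E ∩ B))]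
  refine Finset.sum_eq_zero fun F hF => ?_
  simp only [mem_powerset] at hF
  have hFB : F ⊆ B := hF.trans inter_subset_right
  have key : ∀ G ∈ (D \ B).powerset,
      (-1 : ℝ) ^ (D \ (F ∪ G)).card * h ((F ∪ G) ∩ B)
        = ((-1 : ℝ) ^ ((D ∩ B) \ F).card * h F) * (-1 : ℝ) ^ ((D \ B) \ G).card := by
    intro G hG
    simp only [mem_powerset] at hG
    have hGB : Disjoint G B := disjoint_of_subset_left hG sdiff_disjoint
    have e1 : (F ∪ G) ∩ B = F := by
      rw [union_inter_distrib_right, inter_eq_left.mpr hFB,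
        Finset.disjoint_iff_inter_eq_empty.mp hGB, union_empty]
    have e2 : D \ (F ∪ G) = ((D ∩ B) \ F) ∪ ((D \ B) \ G) := by
      ext x
      simp only [mem_sdiff, mem_union, mem_inter]
      constructor
      · rintro ⟨hxD, hx⟩
        push_neg at hx
        by_cases hxB : x ∈ B
        · exact Or.inl ⟨⟨hxD, hxB⟩, hx.1⟩
        · exact Or.inr ⟨⟨hxD, hxB⟩, hx.2⟩
      · rintro (⟨⟨hxD, hxB⟩, hxF⟩ | ⟨⟨hxD, hxB⟩, hxG⟩)
        · refine ⟨hxD, fun hx => ?_⟩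
          rcases hx with h' | h'
          · exact hxF h'
          · exact Finset.disjoint_left.mp hGB h' hxB
        · refine ⟨hxD, fun hx => ?_⟩
          rcases hx with h' | h'
          · exact hxB (hFB h')
          · exact hxG h'
    have edisj : Disjoint ((D ∩ B) \ F) ((D \ B) \ G) := by
      refine Finset.disjoint_left.mpr fun x hx1 hx2 => ?_
      exact (mem_sdiff.mp (mem_sdiff.mp hx2).1).2 (mem_inter.mp (mem_sdiff.mp hx1).1).2
    rw [e1, e2, card_union_of_disjoint edisj, pow_add]
    ring
  rw [Finset.sum_congr rfl key, ← Finset.mul_sum, sum_pm_sdiff, if_neg, mul_zero]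
  intro hc
  refine hDB fun x hx => ?_
  by_contra hxB
  exact absurd (Finset.mem_sdiff.mpr ⟨hx, hxB⟩) (by simp [hc])

lemma cell_factor_of_mu {r : ℕ} (π : Finset V → ℝ) (A : Fin r → Finset V)
    (hdisj : ∀ i j, i ≠ j → Disjoint (A i) (A j))
    (hmu : ∀ D ⊆ univ.biUnion A, mu π D = ∏ j : Fin r, mu π (D ∩ A j))
    (f : Fin r → Finset V) (hf : ∀ j, f j ⊆ A j) :
    cellProb π (univ.biUnion A) (univ.biUnion f)
      = ∏ j : Fin r, cellProb π (A j) (f j) := by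
  have hDf : univ.biUnion f ⊆ univ.biUnion A :=
    biUnion_subset.mpr fun j _ => (hf j).trans (subset_biUnion_of_mem A (mem_univ j))
  have hkey : ∀ j, (univ.biUnion f) ∩ A j = f j := biUnion_inter_block A hdisj f hf
  rw [moebius_sup (univ.biUnion A) (cellProb π (univ.biUnion A)) (mu π)
    (fun D hD => mu_eq_sum_cellProb π (univ.biUnion A) D hD) (univ.biUnion f) hDf,
    sum_interval_pi A hdisj (univ.biUnion f) hDf
      (fun E => (-1 : ℝ) ^ (E \ univ.biUnion f).card * mu π E)]
  simp only [hkey]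
  have step3 : ∀ p ∈ Fintype.piFinset (fun j => (A j).powerset.filter (fun i => f j ⊆ i)),
      (-1 : ℝ) ^ ((univ.biUnion p) \ (univ.biUnion f)).card * mu π (univ.biUnion p)
        = ∏ j : Fin r, ((-1 : ℝ) ^ (p j \ f j).card * mu π (p j)) := by
    intro p hp
    rw [Fintype.mem_piFinset] at hp
    have hpA : ∀ j, p j ⊆ A j := fun j => mem_powerset.mp (mem_filter.mp (hp j)).1
    have hfp : ∀ j, f j ⊆ p j := fun j => (mem_filter.mp (hp j)).2
    have hpU : univ.biUnion p ⊆ univ.biUnion A :=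
      biUnion_subset.mpr fun j _ => (hpA j).trans (subset_biUnion_of_mem A (mem_univ j))
    have hsd : (univ.biUnion p) \ (univ.biUnion f) = univ.biUnion (fun j => p j \ f j) := by
      ext x
      simp only [mem_sdiff, mem_biUnion, mem_univ, true_and]
      constructor
      · rintro ⟨⟨j, hj⟩, hx⟩
        exact ⟨j, hj, fun hc => hx ⟨j, hc⟩⟩
      · rintro ⟨j, hj, hx⟩
        refine ⟨⟨j, hj⟩, ?_⟩
        rintro ⟨k, hk⟩
        rcases eq_or_ne k j with rfl | hne
        · exact hx hk
        · exact Finset.disjoint_left.mp (hdisj k j hne) ((hf k) hk) ((hpA j) hj)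
    have hcard : ((univ.biUnion p) \ (univ.biUnion f)).card
        = ∑ j : Fin r, (p j \ f j).card := by
      rw [hsd]
      exact Finset.card_biUnion fun i _ j _ hij =>
        (hdisj i j hij).mono (sdiff_subset.trans (hpA i)) (sdiff_subset.trans (hpA j))
    rw [hcard, ← Finset.prod_pow_eq_pow_sum, hmu (univ.biUnion p) hpU, ← Finset.prod_mul_distrib]
    refine Finset.prod_congr rfl fun j _ => ?_
    rw [biUnion_inter_block A hdisj p hpA j]
  have huniv := Finset.prod_univ_sum (fun j => (A j).powerset.filter (fun i => f j ⊆ i))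
    (fun j i => (-1 : ℝ) ^ (i \ f j).card * mu π i)
  rw [Finset.sum_congr rfl step3, ← huniv]
  refine Finset.prod_congr rfl fun j _ => ?_
  exact (moebius_sup (A j) (cellProb π (A j)) (mu π)
    (fun D hD => mu_eq_sum_cellProb π (A j) D hD) (f j) (hf j)).symm

lemma mu_factor_of_gam {r : ℕ} (π : Finset V → ℝ) (hpos : ∀ H, 0 < π H)
    (hsum : ∑ H ∈ (univ : Finset V).powerset, π H = 1)
    (A : Fin r → Finset V)
    (hdisj : ∀ i j, i ≠ j → Disjoint (A i) (A j))
    (hgam : ∀ D ⊆ univ.biUnion A, (∀ i, ¬ D ⊆ A i) → gam π D = 0)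
    (D : Finset V) (hD : D ⊆ univ.biUnion A) :
    mu π D = ∏ j : Fin r, mu π (D ∩ A j) := by
  have hlog : Real.log (mu π D) = ∑ j : Fin r, Real.log (mu π (D ∩ A j)) := by
    rw [← log_mu_eq_sum_gam π D]
    have hrhs : ∀ j : Fin r, Real.log (mu π (D ∩ A j))
        = ∑ E ∈ ((D ∩ A j).powerset).erase ∅, gam π E := by
      intro j
      rw [← log_mu_eq_sum_gam π (D ∩ A j)]
      exact (Finset.sum_erase _ (gam_empty π hsum)).symm
    simp only [hrhs]
    rw [← Finset.sum_biUnion (by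
      intro i _ j _ hij
      refine Finset.disjoint_left.mpr fun E hEi hEj => ?_
      simp only [mem_erase, mem_powerset] at hEi hEj
      obtain ⟨x, hx⟩ := Finset.nonempty_iff_ne_empty.mpr hEi.1
      exact Finset.disjoint_left.mp (hdisj i j hij)
        ((hEi.2.trans inter_subset_right) hx) ((hEj.2.trans inter_subset_right) hx))]
    refine (Finset.sum_subset ?_ ?_).symm
    · intro E hE
      simp only [mem_biUnion, mem_univ, true_and, mem_erase, mem_powerset] at hE
      obtain ⟨j, _, hEj⟩ := hE
      exact mem_powerset.mpr (hEj.trans inter_subset_left)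
    · intro E hE hnE
      simp only [mem_biUnion, mem_univ, true_and, mem_erase, mem_powerset,
        not_exists, not_and] at hnE
      rcases eq_or_ne E ∅ with rfl | hne
      · exact gam_empty π hsum
      · refine hgam E ((mem_powerset.mp hE).trans hD) fun i hc => ?_
        exact (hnE i hne) (subset_inter (mem_powerset.mp hE) hc)
  have h1 : mu π D = Real.exp (Real.log (mu π D)) :=
    (Real.exp_log (mu_pos π hpos D)).symm
  rw [h1, hlog, Real.exp_sum]
  exact Finset.prod_congr rfl fun j _ => Real.exp_log (mu_pos π hpos _)


end Helpers2

theorem mutual_independence_iff_gamma_zero {V : Type*} [Fintype V] [DecidableEq V]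
    (π : Finset V → ℝ) (hpos : ∀ H : Finset V, 0 < π H)
    (hsum : ∑ H ∈ (univ : Finset V).powerset, π H = 1)
    (r : ℕ) (hr : 2 ≤ r) (A : Fin r → Finset V)
    (hne : ∀ i, (A i).Nonempty)
    (hdisj : ∀ i j, i ≠ j → Disjoint (A i) (A j)) :
    (∀ f : Fin r → Finset V, (∀ j, f j ⊆ A j) →
        cellProb π (univ.biUnion A) (univ.biUnion f)
          = ∏ j : Fin r, cellProb π (A j) (f j)) ↔
      (∀ D ⊆ univ.biUnion A, (∀ i, ¬ D ⊆ A i) → gam π D = 0) := by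
  constructor
  · intro hcell D hD hcross
    have hmu := mu_factor_of_cell π A hdisj hcell
    have hlogE : ∀ E ∈ D.powerset,
        (-1 : ℝ) ^ (D \ E).card * Real.log (mu π E)
          = ∑ j : Fin r, (-1 : ℝ) ^ (D \ E).card * Real.log (mu π (E ∩ A j)) := by
      intro E hE
      rw [hmu E ((mem_powerset.mp hE).trans hD),
        Real.log_prod (fun j _ => (mu_pos π hpos _).ne'), Finset.mul_sum]
    rw [gam, Finset.sum_congr rfl hlogE, Finset.sum_comm]
    refine Finset.sum_eq_zero fun j _ => ?_
    exact crossing_sum_zero D (A j) (hcross j) (fun F => Real.log (mu π F))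
  · intro hgam f hf
    exact cell_factor_of_mu π A hdisj
      (mu_factor_of_gam π hpos hsum A hdisj hgam) f hf
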